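/- arXiv:1809.08171 — 3 statements merged into one kernel-verified Lean document; each statement's English description precedes it below -/
import Mathlib

section
/- Assume that ⟨α^∨, q⟩ ≥ 0 for every q ∈ Q and that condition (∗)_α holds, and let F denote the facet F_α provided by (∗)_α. Then for every q ∈ Q one has ⟨α^∨|_Ξ − ρ_F, q − ω⟩ + ⟨α^∨, ω⟩ − m_{F,ω} ≥ 0, where α^∨|_Ξ denotes the restriction of α^∨ to Ξ. -/
variable {V : Type*} [AddCommGroup V] [Module ℚ V]

/-- `F` is a facet of the polytope `Q`: a nonempty proper exposed face of
codimension one. -/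
def IsFacet (Q F : Set V) : Prop :=
  F.Nonempty ∧ F ≠ Q ∧
    (∃ (f : V →ₗ[ℚ] ℚ) (c : ℚ), (∀ q ∈ Q, c ≤ f q) ∧ F = {q ∈ Q | f q = c}) ∧
    Module.finrank ℚ ↥((affineSpan ℚ F).direction) + 1 =
      Module.finrank ℚ ↥((affineSpan ℚ Q).direction)

/-- `ρ` and `m` form the primitive inward-pointing normal data of the facet `F` of
the polytope `Q`, relative to the lattice `Ξ` and the base point `ω`: `ρ` represents
an element of `Hom_ℤ(Ξ,ℤ)` (it is integer valued on `Ξ`) which is primitive (it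
attains the value `1` on `Ξ`), and the affine functional `q ↦ ρ (q - ω) + m` is
nonnegative on `Q` and vanishes exactly on `F`. -/
def IsNormalData (Ξ : Submodule ℤ V) (Q : Set V) (ω : V) (F : Set V)
    (ρ : V →ₗ[ℚ] ℚ) (m : ℚ) : Prop :=
  (∀ x ∈ Ξ, ∃ n : ℤ, ρ x = (n : ℚ)) ∧ (∃ x ∈ Ξ, ρ x = 1) ∧
    (∀ q ∈ Q, 0 ≤ ρ (q - ω) + m) ∧ (∀ q ∈ Q, (ρ (q - ω) + m = 0 ↔ q ∈ F))

/-- `α` is a primitive element of the lattice `Ξ`. -/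
def IsPrimitiveIn (Ξ : Submodule ℤ V) (α : V) : Prop :=
  α ∈ Ξ ∧ α ≠ 0 ∧ ∀ (n : ℤ) (x : V), x ∈ Ξ → α = n • x → n = 1 ∨ n = -1

/- ### Auxiliary lemmas -/

lemma hull_support {s : Finset V} (f : V →ₗ[ℚ] ℚ) (c : ℚ) (h : ∀ b ∈ s, c ≤ f b) :
    ∀ q ∈ convexHull ℚ (s : Set V), c ≤ f q := fun _ hq =>
  convexHull_min (fun b hb => h b hb) (convex_halfSpace_ge f.isLinear c) hq

lemma hull_support_le {s : Finset V} (f : V →ₗ[ℚ] ℚ) (c : ℚ) (h : ∀ b ∈ s, f b ≤ c) :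
    ∀ q ∈ convexHull ℚ (s : Set V), f q ≤ c := fun _ hq =>
  convexHull_min (fun b hb => h b hb) (convex_halfSpace_le f.isLinear c) hq

lemma affineSpan_const (f : V →ₗ[ℚ] ℚ) (c : ℚ) (F : Set V) (h : ∀ x ∈ F, f x = c) :
    ∀ x ∈ (affineSpan ℚ F : Set V), f x = c := by
  intro x hx
  rw [SetLike.mem_coe] at hx
  refine affineSpan_induction (p := fun y => f y = c) hx h ?_
  intro t u v w hu hv hw
  have : t • (u -ᵥ v) +ᵥ w = t • (u - v) + w := by simp [vsub_eq_sub, vadd_eq_add]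
  rw [this]
  simp [map_add, map_smul, map_sub, hu, hv, hw]

lemma vectorSpan_le_ker (f : V →ₗ[ℚ] ℚ) (c : ℚ) (F : Set V) (h : ∀ x ∈ F, f x = c) :
    vectorSpan ℚ F ≤ LinearMap.ker f := by
  rw [vectorSpan_def, Submodule.span_le]
  rintro x hx
  rw [Set.mem_vsub] at hx
  obtain ⟨a, ha, b, hb, rfl⟩ := hx
  simp [vsub_eq_sub, LinearMap.mem_ker, map_sub, h a ha, h b hb]

lemma exists_dual_aux [FiniteDimensional ℚ V] (U : Submodule ℚ V) (v : V) (hv : v ∉ U) :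
    ∃ μ : V →ₗ[ℚ] ℚ, (∀ u ∈ U, μ u = 0) ∧ μ v = 1 := by
  have hvb : U.mkQ v ≠ 0 := by
    simpa [Submodule.mkQ_apply, Submodule.Quotient.mk_eq_zero] using hv
  obtain ⟨φ, hφ⟩ : ∃ φ : Module.Dual ℚ (V ⧸ U), φ (U.mkQ v) ≠ 0 := by
    by_contra hc; push_neg at hc
    exact hvb ((Module.forall_dual_apply_eq_zero_iff ℚ (U.mkQ v)).mp hc)
  refine ⟨(φ (U.mkQ v))⁻¹ • (φ.comp U.mkQ), fun u hu => ?_, ?_⟩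
  · have : U.mkQ u = 0 := by simpa [Submodule.mkQ_apply, Submodule.Quotient.mk_eq_zero] using hu
    simp [LinearMap.comp_apply, this]
  · simp only [LinearMap.smul_apply, LinearMap.comp_apply, smul_eq_mul]
    exact inv_mul_cancel₀ hφ

omit [Module ℚ V] in
lemma fg_of_le {Λ Ξ : Submodule ℤ V} (hΞΛ : Ξ ≤ Λ) (hΛfg : Λ.FG) : Ξ.FG := by
  have : IsNoetherian ℤ Λ := isNoetherian_of_fg_of_noetherian Λ hΛfg
  have h1 : (Ξ.comap Λ.subtype).FG := IsNoetherian.noetherian _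
  have h2 : (Ξ.comap Λ.subtype).map Λ.subtype = Ξ := by
    rw [Submodule.map_comap_eq, Submodule.range_subtype]
    exact inf_eq_right.mpr hΞΛ
  rw [← h2]; exact h1.map _

lemma vectorSpan_eq_span_sub (Q : Set V) (ω : V) (hω : ω ∈ Q) :
    vectorSpan ℚ Q = Submodule.span ℚ {x : V | ∃ q ∈ Q, x = q - ω} := by
  rw [vectorSpan_def]
  apply le_antisymm
  · rw [Submodule.span_le]
    intro x hx
    rw [Set.mem_vsub] at hx
    obtain ⟨a, ha, b, hb, rfl⟩ := hx
    have : a -ᵥ b = (a - ω) - (b - ω) := by rw [vsub_eq_sub]; abel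
    rw [SetLike.mem_coe, this]
    exact sub_mem (Submodule.subset_span ⟨a, ha, rfl⟩) (Submodule.subset_span ⟨b, hb, rfl⟩)
  · rw [Submodule.span_le]
    rintro x ⟨q, hq, rfl⟩
    have : q - ω = q -ᵥ ω := (vsub_eq_sub q ω).symm
    rw [SetLike.mem_coe, this]
    exact Submodule.subset_span (Set.vsub_mem_vsub hq hω)

lemma convex_translate (U : Submodule ℚ V) (v : V) : Convex ℚ {x : V | x - v ∈ U} := by
  intro x hx y hy a b ha hb hab
  have hv : v = a • v + b • v := by rw [← add_smul, hab, one_smul]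
  have : a • x + b • y - v = a • (x - v) + b • (y - v) := by
    nth_rewrite 1 [hv]
    rw [smul_sub, smul_sub]; abel
  simp only [Set.mem_setOf_eq] at *
  rw [this]
  exact U.add_mem (U.smul_mem a hx) (U.smul_mem b hy)

lemma exists_scale (Ξ : Submodule ℤ V) (hfg : Ξ.FG) (f : V →ₗ[ℚ] ℚ) (α : V)
    (hα : α ∈ Ξ) (hfα : f α = 1) :
    ∃ g : ℚ, 0 < g ∧ (∀ x ∈ Ξ, ∃ n : ℤ, g * f x = (n : ℚ)) ∧ (∃ x ∈ Ξ, g * f x = 1) := by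
  obtain ⟨S, hS⟩ := hfg
  set N : ℤ := ∏ x ∈ S, ((f x).den : ℤ) with hN
  have hNpos : 0 < N := Finset.prod_pos (fun x _ => by exact_mod_cast (f x).pos)
  have key : ∀ x ∈ Ξ, ∃ n : ℤ, (N : ℚ) * f x = (n : ℚ) := by
    intro x hx
    rw [← hS] at hx
    induction hx using Submodule.span_induction with
    | mem y hy =>
        obtain ⟨k, hk⟩ : ((f y).den : ℤ) ∣ N := Finset.dvd_prod_of_mem _ hy
        refine ⟨k * (f y).num, ?_⟩
        have h1 : (N : ℚ) = (k : ℚ) * ((f y).den : ℚ) := by rw [hk]; push_cast; ring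
        have h2 : ((f y).den : ℚ) * f y = ((f y).num : ℚ) := by
          exact_mod_cast Rat.den_mul_eq_num (f y)
        rw [h1, mul_assoc, h2]; push_cast; ring
    | zero => exact ⟨0, by simp⟩
    | add y z _ _ hy hz =>
        obtain ⟨a, ha⟩ := hy; obtain ⟨b, hb⟩ := hz
        exact ⟨a + b, by rw [map_add, mul_add, ha, hb]; push_cast; ring⟩
    | smul t y _ hy =>
        obtain ⟨a, ha⟩ := hy
        refine ⟨t * a, ?_⟩
        have ht : f (t • y) = (t : ℚ) * f y := by
          rw [← Int.cast_smul_eq_zsmul ℚ, map_smul, smul_eq_mul]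
        rw [ht]; push_cast; rw [← mul_assoc, mul_comm ((N:ℚ)) ((t:ℚ)), mul_assoc, ha]
  set I : AddSubgroup ℤ :=
    { carrier := {n : ℤ | ∃ x ∈ Ξ, (N : ℚ) * f x = (n : ℚ)}
      zero_mem' := ⟨0, Ξ.zero_mem, by simp⟩
      add_mem' := by
        rintro a b ⟨x, hx, hxa⟩ ⟨y, hy, hyb⟩
        exact ⟨x + y, Ξ.add_mem hx hy, by rw [map_add, mul_add, hxa, hyb]; push_cast; ring⟩
      neg_mem' := by
        rintro a ⟨x, hx, hxa⟩
        exact ⟨-x, Ξ.neg_mem hx, by rw [map_neg, mul_neg, hxa]; push_cast; ring⟩ } with hI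
  obtain ⟨d, hd⟩ := Int.subgroup_cyclic I
  have hmem : ∀ y : ℤ, y ∈ I ↔ ∃ n : ℤ, n * d = y := by
    intro y; rw [hd, AddSubgroup.mem_closure_singleton]; simp [smul_eq_mul]
  have hNI : N ∈ I := ⟨α, hα, by rw [hfα, mul_one]⟩
  have hdne : d ≠ 0 := by
    rintro rfl
    obtain ⟨n, hn⟩ := (hmem N).mp hNI
    omega
  set e : ℤ := |d| with he
  have hepos : 0 < e := abs_pos.mpr hdne
  have heI : e ∈ I := by
    rcases abs_choice d with h | h
    · rw [he, h]; exact (hmem d).mpr ⟨1, one_mul d⟩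
    · rw [he, h]; exact I.neg_mem ((hmem d).mpr ⟨1, one_mul d⟩)
  have hdvd : ∀ n ∈ I, e ∣ n := by
    intro n hn
    obtain ⟨k, hk⟩ := (hmem n).mp hn
    exact (abs_dvd d n).mpr ⟨k, by rw [← hk]; ring⟩
  refine ⟨(N : ℚ) / (e : ℚ), by positivity, ?_, ?_⟩
  · intro x hx
    obtain ⟨n, hn⟩ := key x hx
    obtain ⟨k, hk⟩ := hdvd n ⟨x, hx, hn⟩
    refine ⟨k, ?_⟩
    rw [div_mul_eq_mul_div, hn, hk]
    have : (e : ℚ) ≠ 0 := by positivity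
    push_cast
    rw [mul_comm, mul_div_assoc, div_self this, mul_one]
  · obtain ⟨x, hx, hxe⟩ := heI
    refine ⟨x, hx, ?_⟩
    rw [div_mul_eq_mul_div, hxe]
    have : (e : ℚ) ≠ 0 := by positivity
    field_simp

lemma rotate [FiniteDimensional ℚ V] (s : Finset V) (α v0 : V) (hv0 : v0 ∈ s)
    (hαW : α ∈ vectorSpan ℚ (convexHull ℚ (s : Set V))) :
    ∀ n : ℕ, ∀ (lam : V →ₗ[ℚ] ℚ) (c : ℚ),
      lam α = 1 → (∀ b ∈ s, c ≤ lam b) → lam v0 = c →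
      Module.finrank ℚ (vectorSpan ℚ (convexHull ℚ (s : Set V))) ≤
        Module.finrank ℚ
          ((affineSpan ℚ {q ∈ convexHull ℚ (s : Set V) | lam q = c}).direction) + n →
      ∃ (lam' : V →ₗ[ℚ] ℚ) (c' : ℚ), lam' α = 1 ∧ (∀ b ∈ s, c' ≤ lam' b) ∧ lam' v0 = c' ∧
        ∀ b ∈ s, b - v0 ∈
          (affineSpan ℚ {q ∈ convexHull ℚ (s : Set V) | lam' q = c'}).direction ⊔
            Submodule.span ℚ {α} := by
  intro n
  induction n with
  | zero =>
      intro lam c hlamα hsupp hlamv0 hrank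
      set Q : Set V := convexHull ℚ (s : Set V) with hQ
      set G : Set V := {q ∈ Q | lam q = c} with hG
      have hGQ : G ⊆ Q := Set.sep_subset _ _
      have hdirle : (affineSpan ℚ G).direction ≤ vectorSpan ℚ Q := by
        rw [← direction_affineSpan ℚ Q]
        exact AffineSubspace.direction_le (affineSpan_mono ℚ hGQ)
      have hker : (affineSpan ℚ G).direction ≤ LinearMap.ker lam := by
        rw [direction_affineSpan]
        exact vectorSpan_le_ker lam c G (fun x hx => hx.2)
      have hαnot : α ∉ (affineSpan ℚ G).direction := by
        intro hmem
        have := hker hmem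
        rw [LinearMap.mem_ker, hlamα] at this
        norm_num at this
      have hlt : (affineSpan ℚ G).direction < vectorSpan ℚ Q :=
        lt_of_le_of_ne hdirle (fun h => hαnot (h ▸ hαW))
      have := Submodule.finrank_lt_finrank_of_lt hlt
      omega
  | succ n ih =>
      intro lam c hlamα hsupp hlamv0 hrank
      set Q : Set V := convexHull ℚ (s : Set V) with hQ
      set G : Set V := {q ∈ Q | lam q = c} with hG
      set U : Submodule ℚ V :=
        (affineSpan ℚ G).direction ⊔ Submodule.span ℚ {α} with hU
      by_cases hall : ∀ b ∈ s, b - v0 ∈ U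
      · exact ⟨lam, c, hlamα, hsupp, hlamv0, hall⟩
      push_neg at hall
      obtain ⟨b0, hb0s, hb0U⟩ := hall
      obtain ⟨μ0, hμ0U, hμ0b0⟩ := exists_dual_aux U (b0 - v0) hb0U
      set μ : V →ₗ[ℚ] ℚ := -μ0 with hμ
      have hμU : ∀ u ∈ U, μ u = 0 := fun u hu => by
        simp [hμ, hμ0U u hu]
      have hμb0 : μ (b0 - v0) = -1 := by simp [hμ, hμ0b0]
      have hv0Q : v0 ∈ Q := subset_convexHull ℚ _ hv0
      have hv0G : v0 ∈ G := ⟨hv0Q, hlamv0⟩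
      have hμα : μ α = 0 :=
        hμU α (Submodule.mem_sup_right (Submodule.mem_span_singleton_self α))
      have hGμ : ∀ q ∈ G, μ (q - v0) = 0 := by
        intro q hq
        refine hμU _ (Submodule.mem_sup_left ?_)
        rw [direction_affineSpan]
        exact vsub_mem_vectorSpan ℚ hq hv0G
      have hBpos : ∀ b ∈ s, μ (b - v0) < 0 → c < lam b := by
        intro b hbs hbμ
        rcases lt_or_eq_of_le (hsupp b hbs) with h | h
        · exact h
        · exfalso
          have : b ∈ G := ⟨subset_convexHull ℚ _ hbs, h.symm⟩
          rw [hGμ b this] at hbμ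
          norm_num at hbμ
      set B : Finset V := s.filter (fun b => μ (b - v0) < 0) with hB
      have hb0B : b0 ∈ B := by
        rw [hB, Finset.mem_filter]
        exact ⟨hb0s, by rw [hμb0]; norm_num⟩
      obtain ⟨bs, hbsB, hbsmin⟩ :=
        Finset.exists_min_image B (fun b => (lam b - c) / (-(μ (b - v0)))) ⟨b0, hb0B⟩
      have hbss : bs ∈ s := (Finset.mem_filter.mp hbsB).1
      have hbsμ : μ (bs - v0) < 0 := (Finset.mem_filter.mp hbsB).2
      have hbslam : c < lam bs := hBpos bs hbss hbsμ
      set t : ℚ := (lam bs - c) / (-(μ (bs - v0))) with ht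
      have htpos : 0 < t := div_pos (by linarith) (by linarith)
      set lam' : V →ₗ[ℚ] ℚ := lam + t • μ with hlam'
      set c' : ℚ := c + t * μ v0 with hc'
      have happly : ∀ x : V, lam' x = lam x + t * μ x := fun x => by
        simp [hlam', LinearMap.add_apply, LinearMap.smul_apply, smul_eq_mul]
      have hdiff : ∀ b : V, lam' b - c' = (lam b - c) + t * μ (b - v0) := by
        intro b
        rw [happly, hc', map_sub]
        ring
      have hlam'α : lam' α = 1 := by rw [happly, hμα, hlamα]; ring
      have hlam'v0 : lam' v0 = c' := by rw [happly, hlamv0, hc']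
      have hsupp' : ∀ b ∈ s, c' ≤ lam' b := by
        intro b hbs
        have h := hdiff b
        by_cases hcase : μ (b - v0) < 0
        · have hbB : b ∈ B := by rw [hB, Finset.mem_filter]; exact ⟨hbs, hcase⟩
          have hmin := hbsmin b hbB
          have hden : (0:ℚ) < -(μ (b - v0)) := by linarith
          have h2 : t * (-(μ (b - v0))) ≤ lam b - c := (le_div_iff₀ hden).mp hmin
          rw [mul_neg] at h2
          linarith
        · push_neg at hcase
          have h1 : 0 ≤ lam b - c := by have := hsupp b hbs; linarith
          have h2 : 0 ≤ t * μ (b - v0) := mul_nonneg htpos.le hcase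
          linarith
      set G' : Set V := {q ∈ Q | lam' q = c'} with hG'
      have hGG' : G ⊆ G' := by
        intro q hq
        refine ⟨hq.1, ?_⟩
        have h0 : μ (q - v0) = 0 := hGμ q hq
        have : lam' q - c' = (lam q - c) + t * μ (q - v0) := hdiff q
        rw [h0, hq.2] at this
        have : lam' q - c' = 0 := by rw [this]; ring
        linarith
      have hbsG' : bs ∈ G' := by
        refine ⟨subset_convexHull ℚ _ hbss, ?_⟩
        have h := hdiff bs
        have hne : -(μ (bs - v0)) ≠ 0 := by linarith
        have h1 : t * -(μ (bs - v0)) = lam bs - c := by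
          rw [ht, div_mul_cancel₀ _ hne]
        rw [mul_neg] at h1
        have h2 : t * μ (bs - v0) = -(lam bs - c) := by linarith
        rw [h2] at h
        have : lam' bs - c' = 0 := by rw [h]; ring
        linarith
      have hdirle2 : (affineSpan ℚ G).direction ≤ (affineSpan ℚ G').direction :=
        AffineSubspace.direction_le (affineSpan_mono ℚ hGG')
      have hnew : bs - v0 ∈ (affineSpan ℚ G').direction := by
        rw [direction_affineSpan]
        exact vsub_mem_vectorSpan ℚ hbsG' (hGG' hv0G)
      have hnotold : bs - v0 ∉ (affineSpan ℚ G).direction := by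
        intro hmem
        have : μ (bs - v0) = 0 := hμU _ (Submodule.mem_sup_left hmem)
        linarith
      have hlt : (affineSpan ℚ G).direction < (affineSpan ℚ G').direction :=
        lt_of_le_of_ne hdirle2 (fun h => hnotold (h ▸ hnew))
      have hfr := Submodule.finrank_lt_finrank_of_lt hlt
      refine ih lam' c' hlam'α hsupp' hlam'v0 ?_
      show Module.finrank ℚ (vectorSpan ℚ Q) ≤
        Module.finrank ℚ ((affineSpan ℚ G').direction) + n
      omega

theorem statement0 [FiniteDimensional ℚ V]
    (Λ Ξ : Submodule ℤ V) (hΞΛ : Ξ ≤ Λ) (hΛfg : Λ.FG)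
    (hΛspan : Submodule.span ℚ (Λ : Set V) = ⊤)
    (Q : Set V) (hQpoly : ∃ s : Finset V, Q = convexHull ℚ (s : Set V))
    (ω : V) (hω : ω ∈ Q)
    (hQΞ : ∀ q ∈ Q, q - ω ∈ Submodule.span ℚ (Ξ : Set V))
    (hQfull : Submodule.span ℚ {x : V | ∃ q ∈ Q, x = q - ω} =
      Submodule.span ℚ (Ξ : Set V))
    (α : V) (hα : IsPrimitiveIn Ξ α)
    (αv : V →ₗ[ℚ] ℚ) (hαvΛ : ∀ x ∈ Λ, ∃ n : ℤ, αv x = (n : ℚ)) (hαvα : αv α = 2)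
    (hQα : ∀ q ∈ Q, 0 ≤ αv q)
    (F : Set V) (ρF : V →ₗ[ℚ] ℚ) (m : ℚ)
    (hF : IsFacet Q F) (hρF : IsNormalData Ξ Q ω F ρF m) (hρFα : ρF α = 1)
    (hstar : ∀ (F' : Set V) (ρ' : V →ₗ[ℚ] ℚ) (m' : ℚ),
      IsFacet Q F' → IsNormalData Ξ Q ω F' ρ' m' → 0 < ρ' α →
        (affineSpan ℚ F' : Set V) = (affineSpan ℚ F : Set V) ∨
        (affineSpan ℚ F' : Set V) =
          (fun x => x - αv x • α) '' (affineSpan ℚ F : Set V)) :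
    ∀ q ∈ Q, 0 ≤ (αv (q - ω) - ρF (q - ω)) + αv ω - m := by
  intro q hq
  by_contra hneg
  push_neg at hneg
  obtain ⟨s, hQs⟩ := hQpoly
  subst hQs
  set Q : Set V := convexHull ℚ (s : Set V) with hQdef
  -- the ambient direction space
  have hW : vectorSpan ℚ Q = Submodule.span ℚ (Ξ : Set V) := by
    rw [vectorSpan_eq_span_sub Q ω hω, hQfull]
  have hαΞ : α ∈ Ξ := hα.1
  have hαW : α ∈ vectorSpan ℚ Q := by
    rw [hW]; exact Submodule.subset_span hαΞ
  set lam0 : V →ₗ[ℚ] ℚ := αv - ρF with hlam0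
  have hlam0ap : ∀ x : V, lam0 x = αv x - ρF x := fun x => by
    simp [hlam0, LinearMap.sub_apply]
  have hlam0α : lam0 α = 1 := by rw [hlam0ap, hαvα, hρFα]; norm_num
  have hexpr : ∀ p : V, (αv (p - ω) - ρF (p - ω)) + αv ω - m
      = lam0 p + (ρF ω - m) := by
    intro p
    rw [hlam0ap, map_sub, map_sub]
    ring
  have hsne : s.Nonempty := by
    by_contra h
    rw [Finset.not_nonempty_iff_eq_empty] at h
    have hQe : Q = (∅ : Set V) := by rw [hQdef, h]; simp
    rw [hQe] at hω
    exact hω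
  obtain ⟨v0, hv0s, hv0min⟩ := Finset.exists_min_image s (fun b => lam0 b) hsne
  set c0 : ℚ := lam0 v0 with hc0
  have hsupp0 : ∀ b ∈ s, c0 ≤ lam0 b := hv0min
  have hqge : c0 ≤ lam0 q := hull_support lam0 c0 hsupp0 q hq
  have hv0neg : lam0 v0 + (ρF ω - m) < 0 := by
    rw [hexpr q] at hneg
    have h1 : lam0 v0 = c0 := hc0.symm
    linarith
  -- rotate to a facet
  obtain ⟨lam, c, hlamα, hsupp, hlamv0, hterm⟩ :=
    rotate s α v0 hv0s hαW (Module.finrank ℚ (vectorSpan ℚ Q)) lam0 c0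
      hlam0α hsupp0 rfl (by rw [← hQdef]; omega)
  set F' : Set V := {p ∈ Q | lam p = c} with hF'
  have hv0Q : v0 ∈ Q := subset_convexHull ℚ _ hv0s
  have hv0F' : v0 ∈ F' := ⟨hv0Q, hlamv0⟩
  have hsuppQ : ∀ p ∈ Q, c ≤ lam p := hull_support lam c hsupp
  -- lam is not constant on Q
  have hnotconst : ∃ b ∈ s, c < lam b := by
    by_contra hcon
    push_neg at hcon
    have hcall : ∀ b ∈ s, lam b = c := fun b hb => le_antisymm (hcon b hb) (hsupp b hb)
    have hQc : ∀ p ∈ Q, lam p = c := fun p hp =>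
      le_antisymm (hull_support_le lam c (fun b hb => (hcall b hb).le) p hp)
        (hsuppQ p hp)
    have : α ∈ LinearMap.ker lam := vectorSpan_le_ker lam c Q hQc hαW
    rw [LinearMap.mem_ker, hlamα] at this
    norm_num at this
  obtain ⟨b1, hb1s, hb1lt⟩ := hnotconst
  have hb1Q : b1 ∈ Q := subset_convexHull ℚ _ hb1s
  -- F' is a facet
  have hfacet : IsFacet Q F' := by
    refine ⟨⟨v0, hv0F'⟩, ?_, ⟨lam, c, hsuppQ, rfl⟩, ?_⟩
    · intro hEq
      have : b1 ∈ F' := hEq ▸ hb1Q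
      exact absurd this.2 (ne_of_gt hb1lt)
    · -- dimension count
      set D : Submodule ℚ V := (affineSpan ℚ F').direction with hD
      set U : Submodule ℚ V := D ⊔ Submodule.span ℚ {α} with hUdef
      have hsC : (s : Set V) ⊆ {x : V | x - v0 ∈ U} := fun b hb => hterm b hb
      have hQC : Q ⊆ {x : V | x - v0 ∈ U} :=
        convexHull_min hsC (convex_translate U v0)
      have hWU : vectorSpan ℚ Q ≤ U := by
        rw [vectorSpan_def, Submodule.span_le]
        intro x hx
        rw [Set.mem_vsub] at hx
        obtain ⟨a, ha, b, hb, rfl⟩ := hx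
        have : a -ᵥ b = (a - v0) - (b - v0) := by rw [vsub_eq_sub]; abel
        rw [SetLike.mem_coe, this]
        exact U.sub_mem (hQC ha) (hQC hb)
      have hDW : D ≤ vectorSpan ℚ Q := by
        rw [hD, ← direction_affineSpan ℚ Q]
        exact AffineSubspace.direction_le (affineSpan_mono ℚ (Set.sep_subset _ _))
      have hαspan : Submodule.span ℚ {α} ≤ vectorSpan ℚ Q := by
        rw [Submodule.span_le, Set.singleton_subset_iff]; exact hαW
      have hUW : U = vectorSpan ℚ Q :=
        le_antisymm (sup_le hDW hαspan) hWU
      have hDker : D ≤ LinearMap.ker lam := by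
        rw [hD, direction_affineSpan]
        exact vectorSpan_le_ker lam c F' (fun x hx => hx.2)
      have hinf : D ⊓ Submodule.span ℚ {α} = ⊥ := by
        rw [eq_bot_iff]
        intro x hx
        obtain ⟨hxD, hxα⟩ := hx
        obtain ⟨r, hr⟩ := Submodule.mem_span_singleton.mp hxα
        have h0 : lam x = 0 := hDker hxD
        rw [← hr, map_smul, smul_eq_mul, hlamα, mul_one] at h0
        rw [Submodule.mem_bot, ← hr, h0, zero_smul]
      have hα0 : α ≠ 0 := hα.2.1
      have := Submodule.finrank_sup_add_finrank_inf_eq D (Submodule.span ℚ {α})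
      rw [hinf, finrank_bot, finrank_span_singleton hα0] at this
      rw [direction_affineSpan ℚ Q, ← hUW]
      rw [← hUdef] at this
      omega
  -- normal data for F'
  obtain ⟨g, hgpos, hgint, hgone⟩ :=
    exists_scale Ξ (fg_of_le hΞΛ hΛfg) lam α hαΞ hlamα
  set ρ' : V →ₗ[ℚ] ℚ := g • lam with hρ'
  have hρ'ap : ∀ x : V, ρ' x = g * lam x := fun x => by
    simp [hρ', LinearMap.smul_apply, smul_eq_mul]
  set m' : ℚ := g * (lam ω - c) with hm'
  have hkey : ∀ p : V, ρ' (p - ω) + m' = g * (lam p - c) := by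
    intro p
    rw [hρ'ap, map_sub, hm']
    ring
  have hnormal : IsNormalData Ξ Q ω F' ρ' m' := by
    refine ⟨fun x hx => by rw [hρ'ap]; exact hgint x hx,
      (by obtain ⟨x, hx, h1⟩ := hgone; exact ⟨x, hx, by rw [hρ'ap]; exact h1⟩), ?_, ?_⟩
    · intro p hp
      rw [hkey]
      have := hsuppQ p hp
      have h1 : 0 ≤ lam p - c := by linarith
      exact mul_nonneg hgpos.le h1
    · intro p hp
      rw [hkey]
      constructor
      · intro h
        rcases mul_eq_zero.mp h with h | h
        · exact absurd h (ne_of_gt hgpos)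
        · exact ⟨hp, by linarith⟩
      · intro h
        rw [h.2]
        ring
  have hρ'α : 0 < ρ' α := by
    rw [hρ'ap, hlamα, mul_one]; exact hgpos
  -- apply condition (∗)
  have hv0span : v0 ∈ (affineSpan ℚ F' : Set V) := subset_affineSpan ℚ F' hv0F'
  -- ρF is constant on affineSpan F
  have hFQ : F ⊆ Q := by
    obtain ⟨-, -, ⟨f, cf, hfs, hFeq⟩, -⟩ := hF
    rw [hFeq]; exact Set.sep_subset _ _
  have hρFF : ∀ x ∈ F, ρF x = ρF ω - m := by
    intro x hx
    have h0 : ρF (x - ω) + m = 0 := (hρF.2.2.2 x (hFQ hx)).mpr hx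
    rw [map_sub] at h0
    linarith
  have hρFspan : ∀ x ∈ (affineSpan ℚ F : Set V), ρF x = ρF ω - m :=
    affineSpan_const ρF (ρF ω - m) F hρFF
  rcases hstar F' ρ' m' hfacet hnormal hρ'α with hcase | hcase
  · -- affineSpan F' = affineSpan F
    rw [hcase] at hv0span
    have h1 : ρF v0 = ρF ω - m := hρFspan v0 hv0span
    have h2 : 0 ≤ αv v0 := hQα v0 hv0Q
    rw [hlam0ap, h1] at hv0neg
    linarith
  · -- affineSpan F' = s_α (affineSpan F)
    rw [hcase] at hv0span
    obtain ⟨y, hy, hyeq⟩ := hv0span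
    have h1 : ρF y = ρF ω - m := hρFspan y hy
    have h2 : αv v0 = -(αv y) := by
      rw [← hyeq, map_sub, map_smul, smul_eq_mul, hαvα]; ring
    have h3 : ρF v0 = ρF y - αv y := by
      rw [← hyeq, map_sub, map_smul, smul_eq_mul, hρFα]; ring
    rw [hlam0ap, h2, h3, h1] at hv0neg
    linarith
end

section
/- Assume that ⟨α^∨, q⟩ ≥ 0 for every q ∈ Q and that condition (∗)_α holds. If F and F′ are two distinct facets of Q with ⟨ρ_F,α⟩ > 0 and ⟨ρ_{F′},α⟩ > 0, then ρ_F + ρ_{F′} = α^∨|_Ξ (the restriction of α^∨ to Ξ) and m_{F,ω} + m_{F′,ω} = ⟨α^∨,ω⟩. -/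
variable {V : Type*} [AddCommGroup V] [Module ℚ V]

lemma aux_span_level (ρ : V →ₗ[ℚ] ℚ) (c : ℚ) (F : Set V) (h : ∀ q ∈ F, ρ q = c) :
    ∀ x ∈ (affineSpan ℚ F : Set V), ρ x = c := by
  have hle : affineSpan ℚ F ≤
      AffineSubspace.comap ρ.toAffineMap (AffineSubspace.mk' c (⊥ : Submodule ℚ ℚ)) := by
    rw [affineSpan_le]
    intro q hq
    simp only [AffineSubspace.coe_comap, Set.mem_preimage, AffineSubspace.mem_coe,
      AffineSubspace.mem_mk', Submodule.mem_bot, vsub_eq_sub, sub_eq_zero]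
    simpa using h q hq
  intro x hx
  have hx' := hle hx
  have hx2 : ρ.toAffineMap x ∈ AffineSubspace.mk' c (⊥ : Submodule ℚ ℚ) :=
    AffineSubspace.mem_comap.mp hx'
  rw [AffineSubspace.mem_mk'] at hx2
  simp only [Submodule.mem_bot, vsub_eq_sub, sub_eq_zero] at hx2
  simpa using hx2

lemma aux_dir_vanish (ρ : V →ₗ[ℚ] ℚ) (c : ℚ) (F : Set V) (h : ∀ q ∈ F, ρ q = c) :
    ∀ v ∈ (affineSpan ℚ F).direction, ρ v = 0 := by
  intro v hv
  rw [direction_affineSpan, vectorSpan_def] at hv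
  have hsub : F -ᵥ F ⊆ (LinearMap.ker ρ : Set V) := by
    rintro _ ⟨x, hx, y, hy, rfl⟩
    simp [LinearMap.mem_ker, vsub_eq_sub, map_sub, h x hx, h y hy]
  have := Submodule.span_le.mpr hsub hv
  simpa using this

lemma aux_prop [FiniteDimensional ℚ V] (W U : Submodule ℚ V) (hUW : U ≤ W)
    (hdim : Module.finrank ℚ U + 1 = Module.finrank ℚ W)
    (f g : V →ₗ[ℚ] ℚ) (hfU : ∀ x ∈ U, f x = 0) (hgU : ∀ x ∈ U, g x = 0)
    (a : V) (haW : a ∈ W) (hga : g a ≠ 0) :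
    ∀ x ∈ W, f x * g a = f a * g x := by
  set g' : W →ₗ[ℚ] ℚ := g.comp W.subtype with hg'
  have hrange : LinearMap.range g' = ⊤ := by
    rw [eq_top_iff]
    rintro t -
    refine ⟨(t / g a) • ⟨a, haW⟩, ?_⟩
    simp [hg', div_mul_cancel₀, hga]
  have hker : Module.finrank ℚ (LinearMap.ker g') + 1 = Module.finrank ℚ W := by
    have h := LinearMap.finrank_range_add_finrank_ker g'
    rw [hrange] at h
    simp only [finrank_top, Module.finrank_self] at h
    omega
  have hU' : Submodule.comap W.subtype U ≤ LinearMap.ker g' := by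
    intro x hx
    simp only [LinearMap.mem_ker, hg', LinearMap.comp_apply, Submodule.subtype_apply]
    exact hgU x (by simpa using hx)
  have hfr : Module.finrank ℚ (Submodule.comap W.subtype U) = Module.finrank ℚ U :=
    (Submodule.comapSubtypeEquivOfLe hUW).finrank_eq
  have hUK : Submodule.comap W.subtype U = LinearMap.ker g' :=
    Submodule.eq_of_le_of_finrank_eq hU' (by omega)
  intro x hxW
  have hy : x - (g x / g a) • a ∈ U := by
    have hmem : (⟨x, hxW⟩ - (g x / g a) • ⟨a, haW⟩ : W) ∈ LinearMap.ker g' := by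
      simp only [LinearMap.mem_ker, hg', LinearMap.comp_apply, Submodule.subtype_apply,
        AddSubgroupClass.coe_sub, SetLike.val_smul, map_sub, map_smul, smul_eq_mul]
      field_simp
      ring
    rw [← hUK] at hmem
    simpa using hmem
  have hf0 := hfU _ hy
  rw [map_sub, map_smul, smul_eq_mul, sub_eq_zero] at hf0
  rw [hf0]
  field_simp

lemma aux_facet_subset {Q F : Set V} (hF : IsFacet Q F) : F ⊆ Q := by
  obtain ⟨-, -, ⟨f, c, -, hFe⟩, -⟩ := hF
  rw [hFe]; exact fun q hq => hq.1

lemma aux_nd_levelF {Ξ : Submodule ℤ V} {Q : Set V} {ω : V} {F : Set V}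
    {ρ : V →ₗ[ℚ] ℚ} {m : ℚ} (hFQ : F ⊆ Q) (hnd : IsNormalData Ξ Q ω F ρ m) :
    ∀ q ∈ F, ρ q = ρ ω - m := by
  intro q hq
  have h0 := (hnd.2.2.2 q (hFQ hq)).mpr hq
  rw [map_sub] at h0
  linarith

lemma aux_nd_level {Ξ : Submodule ℤ V} {Q : Set V} {ω : V} {F : Set V}
    {ρ : V →ₗ[ℚ] ℚ} {m : ℚ} (hFQ : F ⊆ Q) (hnd : IsNormalData Ξ Q ω F ρ m) :
    ∀ x ∈ (affineSpan ℚ F : Set V), ρ x = ρ ω - m :=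
  aux_span_level ρ (ρ ω - m) F (aux_nd_levelF hFQ hnd)

lemma aux_nd_dir {Ξ : Submodule ℤ V} {Q : Set V} {ω : V} {F : Set V}
    {ρ : V →ₗ[ℚ] ℚ} {m : ℚ} (hFQ : F ⊆ Q) (hnd : IsNormalData Ξ Q ω F ρ m) :
    ∀ v ∈ (affineSpan ℚ F).direction, ρ v = 0 :=
  aux_dir_vanish ρ (ρ ω - m) F (aux_nd_levelF hFQ hnd)

lemma aux_facet_eq {Ξ : Submodule ℤ V} {Q : Set V} {ω : V} {F : Set V}
    {ρ : V →ₗ[ℚ] ℚ} {m : ℚ} (hF : IsFacet Q F) (hnd : IsNormalData Ξ Q ω F ρ m) :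
    F = Q ∩ (affineSpan ℚ F : Set V) := by
  have hFQ := aux_facet_subset hF
  apply Set.Subset.antisymm
  · exact fun q hq => ⟨hFQ hq, subset_affineSpan ℚ F hq⟩
  · rintro q ⟨hqQ, hqs⟩
    have hl := aux_nd_level hFQ hnd q hqs
    refine (hnd.2.2.2 q hqQ).mp ?_
    rw [map_sub]
    linarith

lemma aux_core [FiniteDimensional ℚ V]
    (Λ Ξ : Submodule ℤ V) (hΞΛ : Ξ ≤ Λ)
    (Q : Set V) (ω : V) (hω : ω ∈ Q)
    (hQΞ : ∀ q ∈ Q, q - ω ∈ Submodule.span ℚ (Ξ : Set V))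
    (hQfull : Submodule.span ℚ {x : V | ∃ q ∈ Q, x = q - ω} = Submodule.span ℚ (Ξ : Set V))
    (α : V) (hαΞ : α ∈ Ξ)
    (αv : V →ₗ[ℚ] ℚ) (hαvΛ : ∀ x ∈ Λ, ∃ n : ℤ, αv x = (n : ℚ)) (hαvα : αv α = 2)
    (Fα : Set V) (ρα : V →ₗ[ℚ] ℚ) (mα : ℚ) (hFαQ : Fα ⊆ Q)
    (hFαnd : IsNormalData Ξ Q ω Fα ρα mα) (hραα : ρα α = 1)
    (F F' : Set V) (ρF ρF' : V →ₗ[ℚ] ℚ) (mF mF' : ℚ)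
    (hF : IsFacet Q F) (hρF : IsNormalData Ξ Q ω F ρF mF)
    (hF' : IsFacet Q F') (hρF' : IsNormalData Ξ Q ω F' ρF' mF')
    (hFpos : 0 < ρF α) (hF'pos : 0 < ρF' α)
    (hspanF : (affineSpan ℚ F : Set V) = (fun x => x - αv x • α) '' (affineSpan ℚ Fα : Set V))
    (hspanF' : (affineSpan ℚ F' : Set V) = (affineSpan ℚ Fα : Set V)) :
    (∀ x ∈ Ξ, ρF x + ρF' x = αv x) ∧ mF + mF' = αv ω := by
  set W := Submodule.span ℚ (Ξ : Set V) with hWdef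
  have hWα : α ∈ W := Submodule.subset_span hαΞ
  have hdirQ : (affineSpan ℚ Q).direction = W := by
    rw [direction_affineSpan, vectorSpan_eq_span_vsub_set_right ℚ hω, ← hQfull]
    congr 1
    ext x
    simp only [Set.mem_image, Set.mem_setOf_eq, vsub_eq_sub]
    constructor
    · rintro ⟨q, hq, rfl⟩; exact ⟨q, hq, rfl⟩
    · rintro ⟨q, hq, rfl⟩; exact ⟨q, hq, rfl⟩
  have hUW : ∀ {G : Set V}, G ⊆ Q → (affineSpan ℚ G).direction ≤ W := by
    intro G hGQ
    rw [direction_affineSpan, ← hdirQ, direction_affineSpan]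
    exact vectorSpan_mono ℚ hGQ
  have hFQ := aux_facet_subset hF
  have hF'Q := aux_facet_subset hF'
  have hdimF : Module.finrank ℚ (affineSpan ℚ F).direction + 1 = Module.finrank ℚ W := by
    rw [← hdirQ]; exact hF.2.2.2
  have hdimF' : Module.finrank ℚ (affineSpan ℚ F').direction + 1 = Module.finrank ℚ W := by
    rw [← hdirQ]; exact hF'.2.2.2
  -- step 1 : ρF' α = 1
  have hspanEq : affineSpan ℚ F' = affineSpan ℚ Fα := SetLike.ext' hspanF'
  have hραdir : ∀ v ∈ (affineSpan ℚ F').direction, ρα v = 0 := by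
    rw [hspanEq]; exact aux_nd_dir hFαQ hFαnd
  have hkey1 := aux_prop W (affineSpan ℚ F').direction (hUW hF'Q) hdimF'
    ρF' ρα (aux_nd_dir hF'Q hρF') hραdir α hWα (by rw [hραα]; norm_num)
  obtain ⟨y, hyΞ, hy1⟩ := hρF'.2.1
  have h1 := hkey1 y (Submodule.subset_span hyΞ)
  obtain ⟨n, hn⟩ := hρF'.1 α hαΞ
  obtain ⟨p, hp⟩ := hFαnd.1 y hyΞ
  have hnp : (n : ℚ) * p = 1 := by rw [← hn, ← hp]; rw [hy1, hραα] at h1; linarith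
  have hρF'α : ρF' α = 1 := by
    have hnp' : n * p = 1 := by exact_mod_cast hnp
    rcases Int.mul_eq_one_iff_eq_one_or_neg_one.mp hnp' with ⟨h, -⟩ | ⟨h, -⟩
    · rw [hn, h]; norm_num
    · exfalso; rw [hn, h] at hF'pos; norm_num at hF'pos
  -- step 2 : the affine functional αv x - (ρF'(x-ω)+mF') vanishes on affineSpan F
  have hA : ∀ x ∈ (affineSpan ℚ F : Set V), αv x - (ρF' (x - ω) + mF') = 0 := by
    intro x hx
    rw [hspanF] at hx
    obtain ⟨z, hz, rfl⟩ := hx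
    have hz' : z ∈ (affineSpan ℚ F' : Set V) := by rw [hspanF']; exact hz
    have hρF'z : ρF' z = ρF' ω - mF' := aux_nd_level hF'Q hρF' z hz'
    simp only [map_sub, map_smul, smul_eq_mul, hαvα, hρF'α]
    ring_nf
    linarith
  -- step 3 : linear parts proportional
  have hgF : ∀ q ∈ F, (αv - ρF') q = mF' - ρF' ω := by
    intro q hq
    have h := hA q (subset_affineSpan ℚ F hq)
    rw [map_sub] at h
    simp only [LinearMap.sub_apply]
    linarith
  have hkey2 := aux_prop W (affineSpan ℚ F).direction (hUW hFQ) hdimF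
    ρF (αv - ρF') (aux_nd_dir hFQ hρF) (aux_dir_vanish _ _ F hgF) α hWα
    (by norm_num [LinearMap.sub_apply, hαvα, hρF'α])
  have hgα : (αv - ρF') α = 1 := by simp only [LinearMap.sub_apply, hαvα, hρF'α]; norm_num
  -- step 4 : ρF α = 1
  obtain ⟨y', hy'Ξ, hy'1⟩ := hρF.2.1
  have h2 := hkey2 y' (Submodule.subset_span hy'Ξ)
  obtain ⟨k, hk⟩ := hρF.1 α hαΞ
  obtain ⟨a, ha⟩ := hαvΛ y' (hΞΛ hy'Ξ)
  obtain ⟨b, hb⟩ := hρF'.1 y' hy'Ξ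
  have hρFα : ρF α = 1 := by
    have : (k : ℚ) * (a - b) = 1 := by
      rw [hgα, hy'1] at h2
      simp only [LinearMap.sub_apply, ha, hb] at h2
      rw [← hk]; linarith
    have hk' : k * (a - b) = 1 := by exact_mod_cast this
    rcases Int.mul_eq_one_iff_eq_one_or_neg_one.mp hk' with ⟨h, -⟩ | ⟨h, -⟩
    · rw [hk, h]; norm_num
    · exfalso; rw [hk, h] at hFpos; norm_num at hFpos
  have hfinal : ∀ x ∈ W, ρF x + ρF' x = αv x := by
    intro x hx
    have h := hkey2 x hx
    rw [hgα, hρFα] at h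
    simp only [LinearMap.sub_apply] at h
    linarith
  refine ⟨fun x hx => hfinal x (Submodule.subset_span hx), ?_⟩
  -- constants
  obtain ⟨q0, hq0F⟩ := hF.1
  have hq0Q : q0 ∈ Q := hFQ hq0F
  have hAq0 := hA q0 (subset_affineSpan ℚ F hq0F)
  have hBq0 : ρF (q0 - ω) + mF = 0 := (hρF.2.2.2 q0 hq0Q).mpr hq0F
  have hlin := hfinal (q0 - ω) (hQΞ q0 hq0Q)
  simp only [map_sub] at hlin hAq0 hBq0
  linarith

theorem statement1 [FiniteDimensional ℚ V]
    (Λ Ξ : Submodule ℤ V) (hΞΛ : Ξ ≤ Λ) (hΛfg : Λ.FG)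
    (hΛspan : Submodule.span ℚ (Λ : Set V) = ⊤)
    (Q : Set V) (hQpoly : ∃ s : Finset V, Q = convexHull ℚ (s : Set V))
    (ω : V) (hω : ω ∈ Q)
    (hQΞ : ∀ q ∈ Q, q - ω ∈ Submodule.span ℚ (Ξ : Set V))
    (hQfull : Submodule.span ℚ {x : V | ∃ q ∈ Q, x = q - ω} =
      Submodule.span ℚ (Ξ : Set V))
    (α : V) (hα : IsPrimitiveIn Ξ α)
    (αv : V →ₗ[ℚ] ℚ) (hαvΛ : ∀ x ∈ Λ, ∃ n : ℤ, αv x = (n : ℚ)) (hαvα : αv α = 2)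
    (hQα : ∀ q ∈ Q, 0 ≤ αv q)
    (hstar : ∃ (Fα : Set V) (ρα : V →ₗ[ℚ] ℚ) (mα : ℚ),
      IsFacet Q Fα ∧ IsNormalData Ξ Q ω Fα ρα mα ∧ ρα α = 1 ∧
        ∀ (F' : Set V) (ρ' : V →ₗ[ℚ] ℚ) (m' : ℚ),
          IsFacet Q F' → IsNormalData Ξ Q ω F' ρ' m' → 0 < ρ' α →
            (affineSpan ℚ F' : Set V) = (affineSpan ℚ Fα : Set V) ∨
            (affineSpan ℚ F' : Set V) =
              (fun x => x - αv x • α) '' (affineSpan ℚ Fα : Set V))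
    (F F' : Set V) (hFF' : F ≠ F')
    (ρF ρF' : V →ₗ[ℚ] ℚ) (mF mF' : ℚ)
    (hF : IsFacet Q F) (hρF : IsNormalData Ξ Q ω F ρF mF)
    (hF' : IsFacet Q F') (hρF' : IsNormalData Ξ Q ω F' ρF' mF')
    (hFα : 0 < ρF α) (hF'α : 0 < ρF' α) :
    (∀ x ∈ Ξ, ρF x + ρF' x = αv x) ∧ mF + mF' = αv ω := by
  obtain ⟨Fα, ρα, mα, hFαfacet, hFαnd, hραα, hall⟩ := hstar
  have hFαQ : Fα ⊆ Q := aux_facet_subset hFαfacet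
  have hc1 := hall F ρF mF hF hρF hFα
  have hc2 := hall F' ρF' mF' hF' hρF' hF'α
  rcases hc1 with h1 | h1 <;> rcases hc2 with h2 | h2
  · exact absurd (by rw [aux_facet_eq hF hρF, aux_facet_eq hF' hρF', h1, h2]) hFF'
  · obtain ⟨ha, hb⟩ := aux_core Λ Ξ hΞΛ Q ω hω hQΞ hQfull α hα.1 αv hαvΛ hαvα Fα ρα mα
      hFαQ hFαnd hραα F' F ρF' ρF mF' mF hF' hρF' hF hρF hF'α hFα h2 h1
    exact ⟨fun x hx => by rw [add_comm]; exact ha x hx, by linarith⟩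
  · exact aux_core Λ Ξ hΞΛ Q ω hω hQΞ hQfull α hα.1 αv hαvΛ hαvα Fα ρα mα
      hFαQ hFαnd hραα F F' ρF ρF' mF mF' hF hρF hF' hρF' hFα hF'α h1 h2
  · exact absurd (by rw [aux_facet_eq hF hρF, aux_facet_eq hF' hρF', h1, h2]) hFF'
end

section
/- Let 𝒱 ⊆ N be a polyhedral convex cone (generated as a cone by finitely many vectors) which is full-dimensional in N. Then every orbit face of Q for 𝒱 contains a vertex v of Q such that {v} is itself an orbit face for 𝒱 (an orbit vertex). -/
/-- The (algebraic) relative interior of a convex set `C`:  `x ∈ C` such that every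
segment in `C` ending at `x` can be prolonged a bit beyond `x` inside `C`. -/
def algRelInt {W : Type*} [AddCommGroup W] [Module ℝ W] (C : Set W) : Set W :=
  {x ∈ C | ∀ y ∈ C, ∃ t : ℝ, 1 < t ∧ y + t • (x - y) ∈ C}

/-- `F` is a (nonempty, exposed) face of `Q`: the set of points of `Q` where some
linear functional attains its minimum over `Q`. -/
def IsFace {W : Type*} [AddCommGroup W] [Module ℝ W] (Q F : Set W) : Prop :=
  F.Nonempty ∧
    ∃ (f : W →ₗ[ℝ] ℝ) (c : ℝ), (∀ q ∈ Q, c ≤ f q) ∧ F = {q ∈ Q | f q = c}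

variable {V : Type*} [AddCommGroup V] [Module ℝ V]

/-- The normal cone `𝒞(F) ⊆ N = V*` of a face `F` of `Q`: the functionals `η` with
`η(q - p) ≥ 0` for all `q ∈ Q`, where `p` is any point of the relative interior
of `F`. -/
def normalCone (Q F : Set V) : Set (Module.Dual ℝ V) :=
  {η | ∀ p ∈ algRelInt F, ∀ q ∈ Q, 0 ≤ η (q - p)}

/-! ### Auxiliary lemmas -/

lemma algRelInt_singleton (v : V) : algRelInt ({v} : Set V) = {v} := by
  ext x
  simp only [algRelInt, Set.mem_setOf_eq, Set.mem_singleton_iff]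
  constructor
  · exact fun h => h.1
  · rintro rfl
    refine ⟨rfl, ?_⟩
    rintro y rfl
    exact ⟨2, one_lt_two, by simp⟩

lemma mem_normalCone_singleton {Q : Set V} {v : V} {η : Module.Dual ℝ V} :
    η ∈ normalCone Q {v} ↔ ∀ q ∈ Q, 0 ≤ η (q - v) := by
  simp [normalCone, algRelInt_singleton]

lemma forall_convexHull_le {s : Finset V} {g : Module.Dual ℝ V} {c : ℝ}
    (h : ∀ x ∈ s, c ≤ g x) : ∀ q ∈ convexHull ℝ (s : Set V), c ≤ g q := by
  intro q hq
  have hsub : convexHull ℝ (s : Set V) ⊆ {x | c ≤ g x} :=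
    convexHull_min (fun x hx => h x hx) (convex_halfSpace_ge (LinearMap.isLinear g) c)
  exact hsub hq

lemma mem_convexHull_finset {s : Finset V} {x : V} :
    x ∈ convexHull ℝ (s : Set V) ↔
      ∃ w : V → ℝ, (∀ y ∈ s, 0 ≤ w y) ∧ ∑ y ∈ s, w y = 1 ∧ ∑ y ∈ s, w y • y = x := by
  rw [Finset.convexHull_eq, Set.mem_setOf_eq]
  constructor
  · rintro ⟨w, h0, h1, hx⟩
    exact ⟨w, h0, h1, by rw [← hx, Finset.centerMass_eq_of_sum_1 _ _ h1]; rfl⟩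
  · rintro ⟨w, h0, h1, hx⟩
    exact ⟨w, h0, h1, by rw [Finset.centerMass_eq_of_sum_1 _ _ h1]; exact hx⟩

lemma algRelInt_convexHull_nonempty (s : Finset V) (hs : s.Nonempty) :
    (algRelInt (convexHull ℝ (s : Set V))).Nonempty := by
  classical
  set n : ℝ := (s.card : ℝ) with hn_def
  have hn : 0 < n := by
    simp only [hn_def, Nat.cast_pos, Finset.card_pos]; exact hs
  have hninv : 0 < n⁻¹ := inv_pos.2 hn
  set p : V := ∑ y ∈ s, n⁻¹ • y with hp_def
  have hsum1 : ∑ _y ∈ s, n⁻¹ = 1 := by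
    rw [Finset.sum_const, nsmul_eq_mul]
    field_simp
    exact hn_def.symm
  have hp : p ∈ convexHull ℝ (s : Set V) :=
    mem_convexHull_finset.2 ⟨fun _ => n⁻¹, fun _ _ => le_of_lt hninv, hsum1, rfl⟩
  refine ⟨p, hp, ?_⟩
  intro y hy
  obtain ⟨u, hu0, hu1, huy⟩ := mem_convexHull_finset.1 hy
  set t : ℝ := 1 + n⁻¹ with ht_def
  have ht : 1 < t := by simp only [ht_def]; linarith
  refine ⟨t, ht, mem_convexHull_finset.2 ⟨fun i => (1 - t) * u i + t * n⁻¹, ?_, ?_, ?_⟩⟩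
  · intro i hi
    have hui : u i ≤ 1 := by
      have := Finset.single_le_sum (fun j hj => hu0 j hj) hi
      linarith [hu1]
    show 0 ≤ (1 - t) * u i + t * n⁻¹
    have hrw : (1 - t) * u i + t * n⁻¹ = (t - u i) * n⁻¹ := by
      simp only [ht_def]; ring
    rw [hrw]
    have : 0 ≤ t - u i := by linarith
    positivity
  · rw [Finset.sum_add_distrib, ← Finset.mul_sum, ← Finset.mul_sum, hu1, hsum1]
    ring
  · have hexp : ∀ i ∈ s, ((1 - t) * u i + t * n⁻¹) • i
        = (1 - t) • (u i • i) + t • (n⁻¹ • i) := by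
      intro i _
      rw [add_smul, mul_smul, mul_smul]
    rw [Finset.sum_congr rfl hexp, Finset.sum_add_distrib, ← Finset.smul_sum, ← Finset.smul_sum,
      huy, ← hp_def]
    rw [smul_sub, sub_smul, one_smul]
    abel

lemma mem_convexHull_filter {s : Finset V} {g : Module.Dual ℝ V} {c : ℝ} [DecidableEq V]
    [DecidablePred (fun i : V => g i = c)]
    (hge : ∀ i ∈ s, c ≤ g i) {x : V} (hx : x ∈ convexHull ℝ (s : Set V)) (hgx : g x = c) :
    x ∈ convexHull ℝ ((s.filter (fun i => g i = c)) : Set V) := by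
  classical
  obtain ⟨w, hw0, hw1, hwx⟩ := mem_convexHull_finset.1 hx
  have hgsum : ∑ i ∈ s, w i * (g i - c) = 0 := by
    have : g x = ∑ i ∈ s, w i * g i := by
      rw [← hwx, map_sum]
      exact Finset.sum_congr rfl fun i _ => by rw [map_smul, smul_eq_mul]
    have hsplit : ∑ i ∈ s, w i * (g i - c) = (∑ i ∈ s, w i * g i) - c * ∑ i ∈ s, w i := by
      rw [Finset.mul_sum, ← Finset.sum_sub_distrib]
      exact Finset.sum_congr rfl fun i _ => by ring
    rw [hsplit, ← this, hgx, hw1]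
    ring
  have hkey : ∀ i ∈ s, w i ≠ 0 → g i = c := by
    intro i hi hwi
    have hterm : ∀ j ∈ s, 0 ≤ w j * (g j - c) := fun j hj =>
      mul_nonneg (hw0 j hj) (by linarith [hge j hj])
    have := (Finset.sum_eq_zero_iff_of_nonneg hterm).1 hgsum i hi
    rcases mul_eq_zero.1 this with h | h
    · exact absurd h hwi
    · linarith [hge i hi]
  refine mem_convexHull_finset.2 ⟨w, fun y hy => hw0 y (Finset.mem_filter.1 hy).1, ?_, ?_⟩
  · rw [Finset.sum_filter_of_ne hkey]; exact hw1
  · rw [Finset.sum_filter_of_ne (fun i hi h => hkey i hi (by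
      intro hw; apply h; rw [hw, zero_smul]))]
    exact hwx

lemma exists_dual_ne_zero_on [FiniteDimensional ℝ V] (D : Finset V) :
    ∃ ξ : Module.Dual ℝ V, ∀ d ∈ D, d ≠ 0 → ξ d ≠ 0 := by
  classical
  induction D using Finset.induction with
  | empty => exact ⟨0, by simp⟩
  | @insert d D hdD ih =>
    obtain ⟨ξ, hξ⟩ := ih
    by_cases hd : d = 0
    · refine ⟨ξ, ?_⟩
      intro d' hd' hne
      rcases Finset.mem_insert.1 hd' with rfl | h
      · exact absurd hd hne
      · exact hξ d' h hne
    · have : ¬ (∀ φ : Module.Dual ℝ V, φ d = 0) := by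
        rw [Module.forall_dual_apply_eq_zero_iff]; exact hd
      push_neg at this
      obtain ⟨ψ, hψ⟩ := this
      obtain ⟨c, hc⟩ := Infinite.exists_notMem_finset
        ((insert d D).image (fun d' => -ξ d' / ψ d'))
      refine ⟨ξ + c • ψ, ?_⟩
      intro d' hd' hne
      simp only [LinearMap.add_apply, LinearMap.smul_apply, smul_eq_mul]
      by_cases hψd' : ψ d' = 0
      · rcases Finset.mem_insert.1 hd' with rfl | h
        · exact absurd hψd' hψ
        · simpa [hψd'] using hξ d' h hne
      · intro habs
        apply hc
        refine Finset.mem_image.2 ⟨d', hd', ?_⟩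
        field_simp
        linarith

section cone
variable (sg : Finset (Module.Dual ℝ V))

def coneOf : Set (Module.Dual ℝ V) :=
  {x : Module.Dual ℝ V | ∃ c : Module.Dual ℝ V → ℝ, (∀ i, 0 ≤ c i) ∧ x = ∑ i ∈ sg, c i • i}

variable {sg}
local notation "C" => coneOf sg

lemma coneV_add {x y : Module.Dual ℝ V} (hx : x ∈ C) (hy : y ∈ C) : x + y ∈ C := by
  obtain ⟨c1, hc1, rfl⟩ := hx
  obtain ⟨c2, hc2, rfl⟩ := hy
  refine ⟨fun i => c1 i + c2 i, fun i => add_nonneg (hc1 i) (hc2 i), ?_⟩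
  rw [← Finset.sum_add_distrib]
  exact Finset.sum_congr rfl fun i _ => by rw [add_smul]

lemma coneV_smul {x : Module.Dual ℝ V} {r : ℝ} (hr : 0 ≤ r) (hx : x ∈ C) : r • x ∈ C := by
  obtain ⟨c1, hc1, rfl⟩ := hx
  refine ⟨fun i => r * c1 i, fun i => mul_nonneg hr (hc1 i), ?_⟩
  rw [Finset.smul_sum]
  exact Finset.sum_congr rfl fun i _ => by rw [smul_smul]

lemma coneV_core (hspan : Submodule.span ℝ ((sg : Set (Module.Dual ℝ V))) = ⊤)
    (ξ : Module.Dual ℝ V) :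
    ∃ ε : ℝ, 0 < ε ∧ ∀ δ : ℝ, 0 < δ → δ ≤ ε → (∑ i ∈ sg, i) + δ • ξ ∈ C := by
  classical
  have hξ : ξ ∈ Submodule.span ℝ ((sg : Set (Module.Dual ℝ V))) := hspan ▸ Submodule.mem_top
  obtain ⟨a, -, ha⟩ := Submodule.mem_span_finset.1 hξ
  set M : ℝ := ∑ i ∈ sg, |a i| with hM_def
  have hM0 : 0 ≤ M := Finset.sum_nonneg fun i _ => abs_nonneg _
  refine ⟨(M + 1)⁻¹, by positivity, ?_⟩
  intro δ hδ0 hδε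
  have habs : ∀ i ∈ sg, 0 ≤ 1 + δ * a i := by
    intro i hi
    have h1 : |a i| ≤ M := Finset.single_le_sum (fun j _ => abs_nonneg (a j)) hi
    have h2 : δ * |a i| ≤ (M + 1)⁻¹ * M := by
      apply mul_le_mul hδε h1 (abs_nonneg _) (by positivity)
    have h3 : (M + 1)⁻¹ * M < 1 := by
      rw [inv_mul_lt_iff₀ (by positivity)]
      linarith
    have h4 : δ * a i ≥ -(δ * |a i|) := by
      have := neg_abs_le (a i)
      nlinarith
    nlinarith
  refine ⟨fun i => if i ∈ sg then 1 + δ * a i else 0, ?_, ?_⟩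
  · intro i
    by_cases hi : i ∈ sg
    · simpa [hi] using habs i hi
    · simp [hi]
  · have hmain : ∑ i ∈ sg, (1 + δ * a i) • i = (∑ i ∈ sg, i) + δ • ξ := by
      rw [Finset.sum_congr rfl (fun i (_ : i ∈ sg) => by
        rw [add_smul, one_smul, smul_smul] : ∀ i ∈ sg, (1 + δ * a i) • i = i + δ • (a i • i)),
        Finset.sum_add_distrib, ← Finset.smul_sum, ha]
    rw [← hmain]
    exact Finset.sum_congr rfl fun i hi => by simp [hi]

end cone

set_option maxHeartbeats 2000000 in
theorem statement7 [FiniteDimensional ℝ V]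
    (Q : Set V) (hQpoly : ∃ s : Finset V, Q = convexHull ℝ (s : Set V))
    (hQfull : affineSpan ℝ Q = ⊤)
    (𝒱 : Set (Module.Dual ℝ V))
    -- `𝒱` is a polyhedral convex cone (generated by finitely many vectors)
    (h𝒱poly : ∃ s : Finset (Module.Dual ℝ V),
      𝒱 = {x | ∃ c : Module.Dual ℝ V → ℝ, (∀ i, 0 ≤ c i) ∧ x = ∑ i ∈ s, c i • i})
    -- `𝒱` is full-dimensional in `N`
    (h𝒱full : Submodule.span ℝ 𝒱 = ⊤) :
    ∀ F : Set V, IsFace Q F → (algRelInt (normalCone Q F) ∩ 𝒱).Nonempty →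
      ∃ v ∈ F, IsFace Q {v} ∧ (algRelInt (normalCone Q {v}) ∩ 𝒱).Nonempty := by
  classical
  obtain ⟨s, rfl⟩ := hQpoly
  obtain ⟨sg, hVc⟩ := h𝒱poly
  have hVc : 𝒱 = coneOf sg := hVc
  intro F hF hOrb
  obtain ⟨hFne, f, c, hfQ, hFeq⟩ := hF
  obtain ⟨η, hηrel, hη𝒱⟩ := hOrb
  have hηN : η ∈ normalCone (convexHull ℝ (s : Set V)) F := hηrel.1
  -- `s` is nonempty
  have hsne : s.Nonempty := by
    obtain ⟨q, hq⟩ := hFne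
    rw [hFeq] at hq
    by_contra h
    rw [Finset.not_nonempty_iff_eq_empty] at h
    have := hq.1
    simp [h] at this
  -- the face is the hull of `sF`
  set sF := s.filter (fun i => f i = c) with hsF_def
  have hsFs : (sF : Set V) ⊆ (s : Set V) := by
    intro i hi
    exact Finset.mem_coe.2 (Finset.mem_filter.1 (Finset.mem_coe.1 hi)).1
  have hFconv : F = convexHull ℝ (sF : Set V) := by
    apply Set.Subset.antisymm
    · intro x hx
      rw [hFeq] at hx
      exact mem_convexHull_filter (fun i hi => hfQ i (subset_convexHull ℝ _ hi)) hx.1 hx.2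
    · intro x hx
      rw [hFeq]
      refine ⟨convexHull_mono hsFs hx, ?_⟩
      have heq : ∀ i ∈ sF, f i = c := fun i hi => (Finset.mem_filter.1 hi).2
      have h1 : c ≤ f x := forall_convexHull_le (fun i hi => (heq i hi).ge) x hx
      have h2 : (-f : Module.Dual ℝ V) x ≥ -c := by
        refine forall_convexHull_le (g := -f) (c := -c) (fun i hi => ?_) x hx
        simp [heq i hi]
      simp only [LinearMap.neg_apply] at h2
      linarith
  have hsFne : sF.Nonempty := by
    obtain ⟨q, hq⟩ := hFne
    rw [hFconv] at hq
    by_contra h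
    rw [Finset.not_nonempty_iff_eq_empty] at h
    simp [h] at hq
  obtain ⟨p, hpF'⟩ := algRelInt_convexHull_nonempty sF hsFne
  rw [← hFconv] at hpF'
  have hpF : p ∈ F := hpF'.1
  have hpQ : p ∈ convexHull ℝ (s : Set V) := (hFeq ▸ hpF).1
  have hηmin : ∀ q ∈ convexHull ℝ (s : Set V), η p ≤ η q := by
    intro q hq
    have := hηN p hpF' q hq
    rw [map_sub] at this
    linarith
  -- `f` belongs to the normal cone of `F`
  have hfN : (f : Module.Dual ℝ V) ∈ normalCone (convexHull ℝ (s : Set V)) F := by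
    intro p' hp' q hq
    have hp'F : p' ∈ F := hp'.1
    have : f p' = c := (hFeq ▸ hp'F).2
    rw [map_sub, this]
    linarith [hfQ q hq]
  -- every minimizer of `η` lies in `F`
  have hAF : ∀ q0 ∈ convexHull ℝ (s : Set V), η q0 = η p → q0 ∈ F := by
    intro q0 hq0 hq0m
    obtain ⟨t, ht1, htN⟩ := hηrel.2 f hfN
    have h1 : 0 ≤ (f + t • (η - f)) (q0 - p) := htN p hpF' q0 hq0
    have hfp : f p = c := (hFeq ▸ hpF).2
    have hfq0 : c ≤ f q0 := hfQ q0 hq0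
    simp only [LinearMap.add_apply, LinearMap.smul_apply, LinearMap.sub_apply, map_sub,
      smul_eq_mul, hfp, hq0m] at h1
    rw [hFeq]
    refine ⟨hq0, ?_⟩
    nlinarith
  -- the minimizing vertices
  set A := s.filter (fun q => η q = η p) with hA_def
  have hAne : A.Nonempty := by
    obtain ⟨x0, hx0s, hx0min⟩ := s.exists_min_image η hsne
    refine ⟨x0, Finset.mem_filter.2 ⟨hx0s, ?_⟩⟩
    have h1 : η x0 ≤ η p := forall_convexHull_le (fun i hi => hx0min i hi) p hpQ
    have h2 : η p ≤ η x0 := hηmin x0 (subset_convexHull ℝ _ hx0s)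
    linarith
  -- a functional injective on `A`
  obtain ⟨ξ, hξ⟩ := exists_dual_ne_zero_on ((A ×ˢ A).image (fun pr => pr.1 - pr.2))
  -- the interior point of the cone 𝒱
  set ω : Module.Dual ℝ V := ∑ i ∈ sg, i with hω_def
  have hspan : Submodule.span ℝ ((sg : Set (Module.Dual ℝ V))) = ⊤ := by
    rw [eq_top_iff, ← h𝒱full]
    apply Submodule.span_le.2
    intro x hx
    rw [hVc] at hx
    obtain ⟨cc, hcc, rfl⟩ := hx
    exact Submodule.sum_mem _ fun i hi => Submodule.smul_mem _ _ (Submodule.subset_span hi)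
  obtain ⟨ε, hε0, hεcore⟩ := coneV_core hspan ξ
  set Bad := (A ×ˢ A).image (fun pr => -(ω (pr.1 - pr.2)) / ξ (pr.1 - pr.2)) with hBad_def
  obtain ⟨δ, hδIoo, hδBad⟩ := (Set.Ioo_infinite hε0).exists_notMem_finset Bad
  set ζ : Module.Dual ℝ V := ω + δ • ξ with hζ_def
  have hζ𝒱 : ζ ∈ 𝒱 := by
    rw [hVc]
    exact hεcore δ hδIoo.1 (le_of_lt hδIoo.2)
  have hζinj : ∀ x ∈ A, ∀ y ∈ A, x ≠ y → ζ x ≠ ζ y := by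
    intro x hx y hy hxy hcon
    have hξxy : ξ (x - y) ≠ 0 := by
      refine hξ _ (Finset.mem_image.2 ⟨(x, y), Finset.mem_product.2 ⟨hx, hy⟩, rfl⟩) ?_
      exact sub_ne_zero.2 hxy
    apply hδBad
    refine Finset.mem_image.2 ⟨(x, y), Finset.mem_product.2 ⟨hx, hy⟩, ?_⟩
    rw [div_eq_iff hξxy]
    have : ω x + δ * ξ x = ω y + δ * ξ y := by
      have := hcon
      simp only [hζ_def, LinearMap.add_apply, LinearMap.smul_apply, smul_eq_mul] at this
      linarith
    rw [map_sub, map_sub]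
    ring_nf
    linarith
  -- the orbit vertex
  obtain ⟨v, hvA, hvmin⟩ := A.exists_min_image ζ hAne
  have hvs : v ∈ s := (Finset.mem_filter.1 hvA).1
  have hvηp : η v = η p := (Finset.mem_filter.1 hvA).2
  have hvF : v ∈ F := hAF v (subset_convexHull ℝ _ hvs) hvηp
  have hvQ : v ∈ convexHull ℝ (s : Set V) := subset_convexHull ℝ _ hvs
  -- the small parameter t
  set g : V → ℝ := fun q => (η q - η p) / (|ζ q - ζ v| + 1) with hg_def
  set T := insert (1 : ℝ) ((s \ A).image g) with hT_def
  have hTne : T.Nonempty := ⟨1, Finset.mem_insert_self _ _⟩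
  set t := T.min' hTne with ht_def
  have hgap : ∀ q ∈ s, q ∉ A → η p < η q := by
    intro q hqs hqA
    have h1 : η p ≤ η q := hηmin q (subset_convexHull ℝ _ hqs)
    have h2 : η q ≠ η p := fun h => hqA (Finset.mem_filter.2 ⟨hqs, h⟩)
    exact lt_of_le_of_ne h1 (Ne.symm h2)
  have ht0 : 0 < t := by
    have hall : ∀ x ∈ T, 0 < x := by
      intro x hx
      rcases Finset.mem_insert.1 hx with rfl | hx'
      · norm_num
      · obtain ⟨q, hq, rfl⟩ := Finset.mem_image.1 hx'
        have hqs : q ∈ s := (Finset.mem_sdiff.1 hq).1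
        have hqA : q ∉ A := (Finset.mem_sdiff.1 hq).2
        have := hgap q hqs hqA
        have hd : 0 < |ζ q - ζ v| + 1 := by positivity
        exact div_pos (by linarith) hd
    exact hall t (T.min'_mem hTne)
  set η' : Module.Dual ℝ V := η + t • ζ with hη'_def
  have hη'app : ∀ x : V, η' x = η x + t * ζ x := by
    intro x
    simp [hη'_def, smul_eq_mul]
  have hη'𝒱 : η' ∈ 𝒱 := by
    rw [hVc]
    exact coneV_add (hVc ▸ hη𝒱) (coneV_smul (le_of_lt ht0) (hVc ▸ hζ𝒱))
  -- strict minimality of η' at v among s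
  have hstrict : ∀ q ∈ s, q ≠ v → η' v < η' q := by
    intro q hqs hqv
    rw [hη'app, hη'app]
    by_cases hqA : q ∈ A
    · have h1 : ζ v ≤ ζ q := hvmin q hqA
      have h2 : ζ q ≠ ζ v := hζinj q hqA v hvA hqv
      have h3 : ζ v < ζ q := lt_of_le_of_ne h1 (Ne.symm h2)
      have h4 : η q = η p := (Finset.mem_filter.1 hqA).2
      rw [hvηp, h4]
      nlinarith
    · have hgq : η p < η q := hgap q hqs hqA
      have hgle : t ≤ g q := by
        apply T.min'_le
        exact Finset.mem_insert_of_mem (Finset.mem_image.2 ⟨q, Finset.mem_sdiff.2 ⟨hqs, hqA⟩, rfl⟩)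
      set d := |ζ q - ζ v| with hd_def
      have hd0 : 0 ≤ d := abs_nonneg _
      have hgq' : g q = (η q - η p) / (d + 1) := rfl
      have htd : t * (d + 1) ≤ η q - η p := by
        rw [hgq'] at hgle
        calc t * (d + 1) ≤ ((η q - η p) / (d + 1)) * (d + 1) := by
              apply mul_le_mul_of_nonneg_right hgle (by linarith)
          _ = η q - η p := by field_simp
      have habs : -(d) ≤ ζ q - ζ v := neg_abs_le _
      have h5 : t * (ζ q - ζ v) ≥ -(t * d) := by nlinarith
      rw [hvηp]
      nlinarith
  have hη'minS : ∀ i ∈ s, η' v ≤ η' i := by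
    intro i hi
    rcases eq_or_ne i v with rfl | h
    · exact le_refl _
    · exact le_of_lt (hstrict i hi h)
  have hη'min : ∀ q ∈ convexHull ℝ (s : Set V), η' v ≤ η' q :=
    forall_convexHull_le hη'minS
  -- {v} is a face of Q
  have hfilter : s.filter (fun i => η' i = η' v) = {v} := by
    ext i
    simp only [Finset.mem_filter, Finset.mem_singleton]
    constructor
    · rintro ⟨his, hie⟩
      by_contra hne
      exact absurd hie (ne_of_gt (hstrict i his hne))
    · rintro rfl
      exact ⟨hvs, rfl⟩
  have hfaceeq : ({v} : Set V) = {q ∈ convexHull ℝ (s : Set V) | η' q = η' v} := by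
    apply Set.Subset.antisymm
    · rintro x rfl
      exact ⟨hvQ, rfl⟩
    · rintro x ⟨hxQ, hxe⟩
      have hmem := mem_convexHull_filter (g := η') (c := η' v) hη'minS hxQ hxe
      rw [hfilter] at hmem
      simpa [convexHull_singleton] using hmem
  have hface : IsFace (convexHull ℝ (s : Set V)) ({v} : Set V) :=
    ⟨⟨v, rfl⟩, η', η' v, hη'min, hfaceeq⟩
  -- η' lies in the relative interior of the normal cone of {v}
  have hη'N : η' ∈ normalCone (convexHull ℝ (s : Set V)) {v} := by
    rw [mem_normalCone_singleton]
    intro q hq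
    rw [map_sub]
    linarith [hη'min q hq]
  have hbpos : ∀ q ∈ s, q ≠ v → 0 < η' (q - v) := by
    intro q hq hqv
    rw [map_sub]
    linarith [hstrict q hq hqv]
  have hrelint : η' ∈ algRelInt (normalCone (convexHull ℝ (s : Set V)) {v}) := by
    refine ⟨hη'N, ?_⟩
    intro y hy
    have hys : ∀ q ∈ s, 0 ≤ y (q - v) := fun q hq =>
      mem_normalCone_singleton.1 hy q (subset_convexHull ℝ _ hq)
    set g2 : V → ℝ := fun q =>
      if η' (q - v) < y (q - v) then η' (q - v) / (2 * (y (q - v) - η' (q - v))) else 1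
      with hg2_def
    set T2 := insert (1 : ℝ) ((s.erase v).image g2) with hT2_def
    have hT2ne : T2.Nonempty := ⟨1, Finset.mem_insert_self _ _⟩
    set ε2 := T2.min' hT2ne with hε2_def
    have hε2pos : 0 < ε2 := by
      have hall : ∀ x ∈ T2, 0 < x := by
        intro x hx
        rcases Finset.mem_insert.1 hx with rfl | hx'
        · norm_num
        · obtain ⟨q, hq, rfl⟩ := Finset.mem_image.1 hx'
          have hqv : q ≠ v := Finset.ne_of_mem_erase hq
          have hqs : q ∈ s := Finset.mem_of_mem_erase hq
          have hb := hbpos q hqs hqv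
          show 0 < g2 q
          simp only [hg2_def]
          split_ifs with hlt
          · exact div_pos hb (by linarith)
          · norm_num
      exact hall ε2 (T2.min'_mem hT2ne)
    refine ⟨1 + ε2, by linarith, ?_⟩
    rw [mem_normalCone_singleton]
    have hGs : ∀ i ∈ s, 0 ≤ (y + (1 + ε2) • (η' - y)) (i - v) := by
      intro i hi
      simp only [LinearMap.add_apply, LinearMap.smul_apply, LinearMap.sub_apply, smul_eq_mul]
      rcases eq_or_ne i v with rfl | hiv
      · simp
      · have ha : 0 ≤ y (i - v) := hys i hi
        have hb : 0 < η' (i - v) := hbpos i hi hiv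
        by_cases hlt : η' (i - v) < y (i - v)
        · have hgle : ε2 ≤ g2 i := by
            apply T2.min'_le
            exact Finset.mem_insert_of_mem
              (Finset.mem_image.2 ⟨i, Finset.mem_erase.2 ⟨hiv, hi⟩, rfl⟩)
          have hg2i : g2 i = η' (i - v) / (2 * (y (i - v) - η' (i - v))) := by
            rw [hg2_def]; exact if_pos hlt
          rw [hg2i] at hgle
          have h6 : ε2 * (2 * (y (i - v) - η' (i - v))) ≤ η' (i - v) := by
            calc ε2 * (2 * (y (i - v) - η' (i - v)))
                ≤ (η' (i - v) / (2 * (y (i - v) - η' (i - v)))) * (2 * (y (i - v) - η' (i - v))) :=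
                  mul_le_mul_of_nonneg_right hgle (by linarith)
              _ = η' (i - v) := div_mul_cancel₀ _
                  (ne_of_gt (by linarith : (0:ℝ) < 2 * (y (i - v) - η' (i - v))))
          nlinarith
        · push_neg at hlt
          nlinarith
    have hvle : ∀ i ∈ s, (y + (1 + ε2) • (η' - y)) v ≤ (y + (1 + ε2) • (η' - y)) i := by
      intro i hi
      have := hGs i hi
      rw [map_sub] at this
      linarith
    intro q hq
    rw [map_sub]
    linarith [forall_convexHull_le hvle q hq]
  exact ⟨v, hvF, hface, ⟨η', hrelint, hη'𝒱⟩⟩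
end
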